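/- Let P be the tetrahedron in ℝ³ with vertices (−1,−1,−1), (1,0,0), (0,1,0), (0,0,1). Then L(P) = 1 and L(2P) = 2 (where 2P = P + P); in particular the ten segments determined by the five lattice points of P (the four vertices and the origin) lie in ten pairwise distinct classes of ℤ₃ℙ². -/
import Mathlib


open Pointwise

/-- The real point corresponding to a lattice point. -/
def coeV {n : ℕ} (v : Fin n → ℤ) : Fin n → ℝ := fun i => (v i : ℝ)

/-- A vector in `ℤ^n` is primitive if the gcd of its coordinates is `1`. -/
def IsPrim {n : ℕ} (v : Fin n → ℤ) : Prop := Finset.univ.gcd v = 1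

/-- The zonotope with base lattice point `A` obtained as the Minkowski sum of the
lattice segments `[0, v i]`. -/
def Zono {n L : ℕ} (A : Fin n → ℤ) (v : Fin L → Fin n → ℤ) : Set (Fin n → ℝ) :=
  ({coeV A} : Set (Fin n → ℝ)) + ∑ i, segment ℝ 0 (coeV (v i))

/-- `P` contains (a translate of) a Minkowski sum of `L` primitive lattice segments. -/
def IsDecomp {n : ℕ} (P : Set (Fin n → ℝ)) (L : ℕ) : Prop :=
  ∃ (A : Fin n → ℤ) (v : Fin L → Fin n → ℤ), (∀ i, IsPrim (v i)) ∧ Zono A v ⊆ P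

/-- `L` is the Minkowski length of `P`. -/
def MinkLen {n : ℕ} (P : Set (Fin n → ℝ)) (L : ℕ) : Prop :=
  IsDecomp P L ∧ ∀ M, IsDecomp P M → M ≤ L

/-- `P` is a lattice polytope: the convex hull of a nonempty finite set of lattice points. -/
def IsLatticePolytope {n : ℕ} (P : Set (Fin n → ℝ)) : Prop :=
  ∃ S : Finset (Fin n → ℤ), S.Nonempty ∧ P = convexHull ℝ (coeV '' ↑S)

/-- `Zono A v` is a smallest maximal Minkowski decomposition in `P`: it realizes the
Minkowski length of `P` and is minimal with respect to inclusion among all maximal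
decompositions in `P`. -/
def IsSmallestMax {n L : ℕ} (P : Set (Fin n → ℝ)) (A : Fin n → ℤ)
    (v : Fin L → Fin n → ℤ) : Prop :=
  (∀ i, IsPrim (v i)) ∧ Zono A v ⊆ P ∧ MinkLen P L ∧
    ∀ (B : Fin n → ℤ) (w : Fin L → Fin n → ℤ), (∀ i, IsPrim (w i)) →
      Zono B w ⊆ P → Zono B w ⊆ Zono A v → Zono B w = Zono A v

/-- Two direction vectors represent the same class in `ℤ₃ℙ²`:
they are congruent mod 3 up to sign. -/
def SameClass3 (d e : Fin 3 → ℤ) : Prop :=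
  (∀ i, (d i - e i) % 3 = 0) ∨ (∀ i, (d i + e i) % 3 = 0)

/-- The tetrahedron with vertices `(-1,-1,-1), (1,0,0), (0,1,0), (0,0,1)`. -/
def P19 : Set (Fin 3 → ℝ) :=
  convexHull ℝ {coeV ![-1, -1, -1], coeV ![1, 0, 0], coeV ![0, 1, 0], coeV ![0, 0, 1]}

/- ### Auxiliary lemmas -/

instance (d e : Fin 3 → ℤ) : Decidable (SameClass3 d e) := by
  unfold SameClass3; infer_instance

lemma hP_ineq : ∀ p ∈ P19, p 0 + p 1 + p 2 ≤ 1 ∧ -1 ≤ 3 * p 0 - p 1 - p 2 ∧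
    -1 ≤ -p 0 + 3 * p 1 - p 2 ∧ -1 ≤ -p 0 - p 1 + 3 * p 2 := by
  intro p hp
  have := convexHull_min
    (s := {coeV ![-1, -1, -1], coeV ![1, 0, 0], coeV ![0, 1, 0], coeV ![0, 0, 1]})
    (t := {q : Fin 3 → ℝ | q 0 + q 1 + q 2 ≤ 1 ∧ -1 ≤ 3 * q 0 - q 1 - q 2 ∧
      -1 ≤ -q 0 + 3 * q 1 - q 2 ∧ -1 ≤ -q 0 - q 1 + 3 * q 2}) ?_ ?_ hp
  · exact this
  · intro q hq
    rcases hq with rfl | rfl | rfl | rfl <;> simp [coeV] <;> norm_num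
  · intro x hx y hy a b ha hb hab
    simp only [Set.mem_setOf_eq, Pi.add_apply, Pi.smul_apply, smul_eq_mul] at *
    refine ⟨by nlinarith, by nlinarith, by nlinarith, by nlinarith⟩

lemma hZint (x : Fin 3 → ℤ) (hx : coeV x ∈ P19) :
    x 0 + x 1 + x 2 ≤ 1 ∧ -1 ≤ 3 * x 0 - x 1 - x 2 ∧
    -1 ≤ -x 0 + 3 * x 1 - x 2 ∧ -1 ≤ -x 0 - x 1 + 3 * x 2 := by
  obtain ⟨h1, h2, h3, h4⟩ := hP_ineq _ hx
  simp only [coeV] at h1 h2 h3 h4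
  exact ⟨by exact_mod_cast h1, by exact_mod_cast h2, by exact_mod_cast h3,
    by exact_mod_cast h4⟩

lemma h2int (x : Fin 3 → ℤ) (hx : coeV x ∈ P19 + P19) :
    x 0 + x 1 + x 2 ≤ 2 ∧ -2 ≤ 3 * x 0 - x 1 - x 2 ∧
    -2 ≤ -x 0 + 3 * x 1 - x 2 ∧ -2 ≤ -x 0 - x 1 + 3 * x 2 := by
  obtain ⟨p, hp, q, hq, hpq⟩ := Set.mem_add.1 hx
  obtain ⟨p1, p2, p3, p4⟩ := hP_ineq _ hp
  obtain ⟨q1, q2, q3, q4⟩ := hP_ineq _ hq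
  have e : ∀ i, (x i : ℝ) = p i + q i := by
    intro i
    have := congrFun hpq i
    simpa [coeV] using this.symm
  have h1 : (x 0 : ℝ) + x 1 + x 2 ≤ 2 := by rw [e 0, e 1, e 2]; linarith
  have h2 : (-2 : ℝ) ≤ 3 * x 0 - x 1 - x 2 := by rw [e 0, e 1, e 2]; linarith
  have h3 : (-2 : ℝ) ≤ -x 0 + 3 * x 1 - x 2 := by rw [e 0, e 1, e 2]; linarith
  have h4 : (-2 : ℝ) ≤ -x 0 - x 1 + 3 * x 2 := by rw [e 0, e 1, e 2]; linarith
  exact ⟨by exact_mod_cast h1, by exact_mod_cast h2, by exact_mod_cast h3,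
    by exact_mod_cast h4⟩

lemma mem_zono {n L : ℕ} (A : Fin n → ℤ) (v : Fin L → Fin n → ℤ) (S : Finset (Fin L)) :
    coeV (A + ∑ i ∈ S, v i) ∈ Zono A v := by
  have hc : coeV (A + ∑ i ∈ S, v i) = coeV A + ∑ i ∈ S, coeV (v i) := by
    funext j
    simp [coeV, Finset.sum_apply]
  rw [hc, Zono]
  refine Set.add_mem_add (Set.mem_singleton _) ?_
  rw [Set.mem_fintype_sum]
  refine ⟨fun i => if i ∈ S then coeV (v i) else 0, fun i => ?_, ?_⟩
  · by_cases h : i ∈ S <;> simp [h, left_mem_segment, right_mem_segment]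
  · simp

lemma prim_ne {v : Fin 3 → ℤ} (h : IsPrim v) : ¬ (v 0 = 0 ∧ v 1 = 0 ∧ v 2 = 0) := by
  rintro ⟨h0, h1, h2⟩
  have : Finset.univ.gcd v = 0 :=
    Finset.gcd_eq_zero_iff.2 (by intro i _; fin_cases i <;> assumption)
  rw [IsPrim] at h; omega

lemma lemA (v0 v1 v2 : ℤ) (h : ¬(v0 = 0 ∧ v1 = 0 ∧ v2 = 0)) :
    3 ≤ max 0 (v0 + v1 + v2) + max 0 (v0 + v1 + v2 - 4*v0) + max 0 (v0 + v1 + v2 - 4*v1)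
      + max 0 (v0 + v1 + v2 - 4*v2) := by omega

lemma budget (b C u v w : ℤ) (h0 : -b ≤ C) (h1 : -b ≤ C - u) (h2 : -b ≤ C - v)
    (h3 : -b ≤ C - w) (h4 : -b ≤ C - u - v) (h5 : -b ≤ C - u - w)
    (h6 : -b ≤ C - v - w) (h7 : -b ≤ C - u - v - w) :
    max 0 u + max 0 v + max 0 w ≤ b + C := by omega

lemma budget2 (b C u v : ℤ) (h0 : -b ≤ C) (h1 : -b ≤ C - u) (h2 : -b ≤ C - v)
    (h3 : -b ≤ C - u - v) :
    max 0 u + max 0 v ≤ b + C := by omega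

lemma noTwo (a0 a1 a2 x0 x1 x2 y0 y1 y2 : ℤ)
    (nx : ¬(x0 = 0 ∧ x1 = 0 ∧ x2 = 0)) (ny : ¬(y0 = 0 ∧ y1 = 0 ∧ y2 = 0))
    (hE : a0 + (a1) + (a2) ≤ 1 ∧ -1 ≤ 3 * (a0) - (a1) - (a2) ∧ -1 ≤ -(a0) + 3 * (a1) - (a2) ∧ -1 ≤ -(a0) - (a1) + 3 * (a2))
    (h0 : a0 + x0 + (a1 + x1) + (a2 + x2) ≤ 1 ∧ -1 ≤ 3 * (a0 + x0) - (a1 + x1) - (a2 + x2) ∧ -1 ≤ -(a0 + x0) + 3 * (a1 + x1) - (a2 + x2) ∧ -1 ≤ -(a0 + x0) - (a1 + x1) + 3 * (a2 + x2))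
    (h1 : a0 + y0 + (a1 + y1) + (a2 + y2) ≤ 1 ∧ -1 ≤ 3 * (a0 + y0) - (a1 + y1) - (a2 + y2) ∧ -1 ≤ -(a0 + y0) + 3 * (a1 + y1) - (a2 + y2) ∧ -1 ≤ -(a0 + y0) - (a1 + y1) + 3 * (a2 + y2))
    (h01 : a0 + (x0 + y0) + (a1 + (x1 + y1)) + (a2 + (x2 + y2)) ≤ 1 ∧ -1 ≤ 3 * (a0 + (x0 + y0)) - (a1 + (x1 + y1)) - (a2 + (x2 + y2)) ∧ -1 ≤ -(a0 + (x0 + y0)) + 3 * (a1 + (x1 + y1)) - (a2 + (x2 + y2)) ∧ -1 ≤ -(a0 + (x0 + y0)) - (a1 + (x1 + y1)) + 3 * (a2 + (x2 + y2)))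
    : False := by
  have c0 : -1 ≤ -(a0 + a1 + a2) := by linarith only [hE.1]
  have c1 : -1 ≤ -(a0 + a1 + a2) - (x0 + x1 + x2) := by linarith only [h0.1]
  have c2 : -1 ≤ -(a0 + a1 + a2) - (y0 + y1 + y2) := by linarith only [h1.1]
  have c3 : -1 ≤ -(a0 + a1 + a2) - (x0 + x1 + x2) - (y0 + y1 + y2) := by linarith only [h01.1]
  have c4 : -1 ≤ (3 * a0 - a1 - a2) := by linarith only [hE.2.1]
  have c5 : -1 ≤ (3 * a0 - a1 - a2) - (x0 + x1 + x2 - 4*x0) := by linarith only [h0.2.1]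
  have c6 : -1 ≤ (3 * a0 - a1 - a2) - (y0 + y1 + y2 - 4*y0) := by linarith only [h1.2.1]
  have c7 : -1 ≤ (3 * a0 - a1 - a2) - (x0 + x1 + x2 - 4*x0) - (y0 + y1 + y2 - 4*y0) := by linarith only [h01.2.1]
  have c8 : -1 ≤ (-a0 + 3 * a1 - a2) := by linarith only [hE.2.2.1]
  have c9 : -1 ≤ (-a0 + 3 * a1 - a2) - (x0 + x1 + x2 - 4*x1) := by linarith only [h0.2.2.1]
  have c10 : -1 ≤ (-a0 + 3 * a1 - a2) - (y0 + y1 + y2 - 4*y1) := by linarith only [h1.2.2.1]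
  have c11 : -1 ≤ (-a0 + 3 * a1 - a2) - (x0 + x1 + x2 - 4*x1) - (y0 + y1 + y2 - 4*y1) := by linarith only [h01.2.2.1]
  have c12 : -1 ≤ (-a0 - a1 + 3 * a2) := by linarith only [hE.2.2.2]
  have c13 : -1 ≤ (-a0 - a1 + 3 * a2) - (x0 + x1 + x2 - 4*x2) := by linarith only [h0.2.2.2]
  have c14 : -1 ≤ (-a0 - a1 + 3 * a2) - (y0 + y1 + y2 - 4*y2) := by linarith only [h1.2.2.2]
  have c15 : -1 ≤ (-a0 - a1 + 3 * a2) - (x0 + x1 + x2 - 4*x2) - (y0 + y1 + y2 - 4*y2) := by linarith only [h01.2.2.2]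
  have B1 := budget2 1 (-(a0 + a1 + a2)) (x0 + x1 + x2) (y0 + y1 + y2) c0 c1 c2 c3
  have B2 := budget2 1 ((3 * a0 - a1 - a2)) (x0 + x1 + x2 - 4*x0) (y0 + y1 + y2 - 4*y0) c4 c5 c6 c7
  have B3 := budget2 1 ((-a0 + 3 * a1 - a2)) (x0 + x1 + x2 - 4*x1) (y0 + y1 + y2 - 4*y1) c8 c9 c10 c11
  have B4 := budget2 1 ((-a0 - a1 + 3 * a2)) (x0 + x1 + x2 - 4*x2) (y0 + y1 + y2 - 4*y2) c12 c13 c14 c15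
  have axx := lemA x0 x1 x2 nx
  have ayy := lemA y0 y1 y2 ny
  linarith only [B1, B2, B3, B4, axx, ayy]

lemma noThree (a0 a1 a2 x0 x1 x2 y0 y1 y2 z0 z1 z2 : ℤ)
    (nx : ¬(x0 = 0 ∧ x1 = 0 ∧ x2 = 0)) (ny : ¬(y0 = 0 ∧ y1 = 0 ∧ y2 = 0)) (nz3 : ¬(z0 = 0 ∧ z1 = 0 ∧ z2 = 0))
    (hE : a0 + (a1) + (a2) ≤ 2 ∧ -2 ≤ 3 * (a0) - (a1) - (a2) ∧ -2 ≤ -(a0) + 3 * (a1) - (a2) ∧ -2 ≤ -(a0) - (a1) + 3 * (a2))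
    (h0 : a0 + x0 + (a1 + x1) + (a2 + x2) ≤ 2 ∧ -2 ≤ 3 * (a0 + x0) - (a1 + x1) - (a2 + x2) ∧ -2 ≤ -(a0 + x0) + 3 * (a1 + x1) - (a2 + x2) ∧ -2 ≤ -(a0 + x0) - (a1 + x1) + 3 * (a2 + x2))
    (h1 : a0 + y0 + (a1 + y1) + (a2 + y2) ≤ 2 ∧ -2 ≤ 3 * (a0 + y0) - (a1 + y1) - (a2 + y2) ∧ -2 ≤ -(a0 + y0) + 3 * (a1 + y1) - (a2 + y2) ∧ -2 ≤ -(a0 + y0) - (a1 + y1) + 3 * (a2 + y2))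
    (h2 : a0 + z0 + (a1 + z1) + (a2 + z2) ≤ 2 ∧ -2 ≤ 3 * (a0 + z0) - (a1 + z1) - (a2 + z2) ∧ -2 ≤ -(a0 + z0) + 3 * (a1 + z1) - (a2 + z2) ∧ -2 ≤ -(a0 + z0) - (a1 + z1) + 3 * (a2 + z2))
    (h01 : a0 + (x0 + y0) + (a1 + (x1 + y1)) + (a2 + (x2 + y2)) ≤ 2 ∧ -2 ≤ 3 * (a0 + (x0 + y0)) - (a1 + (x1 + y1)) - (a2 + (x2 + y2)) ∧ -2 ≤ -(a0 + (x0 + y0)) + 3 * (a1 + (x1 + y1)) - (a2 + (x2 + y2)) ∧ -2 ≤ -(a0 + (x0 + y0)) - (a1 + (x1 + y1)) + 3 * (a2 + (x2 + y2)))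
    (h02 : a0 + (x0 + z0) + (a1 + (x1 + z1)) + (a2 + (x2 + z2)) ≤ 2 ∧ -2 ≤ 3 * (a0 + (x0 + z0)) - (a1 + (x1 + z1)) - (a2 + (x2 + z2)) ∧ -2 ≤ -(a0 + (x0 + z0)) + 3 * (a1 + (x1 + z1)) - (a2 + (x2 + z2)) ∧ -2 ≤ -(a0 + (x0 + z0)) - (a1 + (x1 + z1)) + 3 * (a2 + (x2 + z2)))
    (h12 : a0 + (y0 + z0) + (a1 + (y1 + z1)) + (a2 + (y2 + z2)) ≤ 2 ∧ -2 ≤ 3 * (a0 + (y0 + z0)) - (a1 + (y1 + z1)) - (a2 + (y2 + z2)) ∧ -2 ≤ -(a0 + (y0 + z0)) + 3 * (a1 + (y1 + z1)) - (a2 + (y2 + z2)) ∧ -2 ≤ -(a0 + (y0 + z0)) - (a1 + (y1 + z1)) + 3 * (a2 + (y2 + z2)))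
    (h012 : a0 + (x0 + (y0 + z0)) + (a1 + (x1 + (y1 + z1))) + (a2 + (x2 + (y2 + z2))) ≤ 2 ∧ -2 ≤ 3 * (a0 + (x0 + (y0 + z0))) - (a1 + (x1 + (y1 + z1))) - (a2 + (x2 + (y2 + z2))) ∧ -2 ≤ -(a0 + (x0 + (y0 + z0))) + 3 * (a1 + (x1 + (y1 + z1))) - (a2 + (x2 + (y2 + z2))) ∧ -2 ≤ -(a0 + (x0 + (y0 + z0))) - (a1 + (x1 + (y1 + z1))) + 3 * (a2 + (x2 + (y2 + z2))))
    : False := by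
  have c0 : -2 ≤ -(a0 + a1 + a2) := by linarith only [hE.1]
  have c1 : -2 ≤ -(a0 + a1 + a2) - (x0 + x1 + x2) := by linarith only [h0.1]
  have c2 : -2 ≤ -(a0 + a1 + a2) - (y0 + y1 + y2) := by linarith only [h1.1]
  have c3 : -2 ≤ -(a0 + a1 + a2) - (z0 + z1 + z2) := by linarith only [h2.1]
  have c4 : -2 ≤ -(a0 + a1 + a2) - (x0 + x1 + x2) - (y0 + y1 + y2) := by linarith only [h01.1]
  have c5 : -2 ≤ -(a0 + a1 + a2) - (x0 + x1 + x2) - (z0 + z1 + z2) := by linarith only [h02.1]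
  have c6 : -2 ≤ -(a0 + a1 + a2) - (y0 + y1 + y2) - (z0 + z1 + z2) := by linarith only [h12.1]
  have c7 : -2 ≤ -(a0 + a1 + a2) - (x0 + x1 + x2) - (y0 + y1 + y2) - (z0 + z1 + z2) := by linarith only [h012.1]
  have c8 : -2 ≤ (3 * a0 - a1 - a2) := by linarith only [hE.2.1]
  have c9 : -2 ≤ (3 * a0 - a1 - a2) - (x0 + x1 + x2 - 4*x0) := by linarith only [h0.2.1]
  have c10 : -2 ≤ (3 * a0 - a1 - a2) - (y0 + y1 + y2 - 4*y0) := by linarith only [h1.2.1]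
  have c11 : -2 ≤ (3 * a0 - a1 - a2) - (z0 + z1 + z2 - 4*z0) := by linarith only [h2.2.1]
  have c12 : -2 ≤ (3 * a0 - a1 - a2) - (x0 + x1 + x2 - 4*x0) - (y0 + y1 + y2 - 4*y0) := by linarith only [h01.2.1]
  have c13 : -2 ≤ (3 * a0 - a1 - a2) - (x0 + x1 + x2 - 4*x0) - (z0 + z1 + z2 - 4*z0) := by linarith only [h02.2.1]
  have c14 : -2 ≤ (3 * a0 - a1 - a2) - (y0 + y1 + y2 - 4*y0) - (z0 + z1 + z2 - 4*z0) := by linarith only [h12.2.1]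
  have c15 : -2 ≤ (3 * a0 - a1 - a2) - (x0 + x1 + x2 - 4*x0) - (y0 + y1 + y2 - 4*y0) - (z0 + z1 + z2 - 4*z0) := by linarith only [h012.2.1]
  have c16 : -2 ≤ (-a0 + 3 * a1 - a2) := by linarith only [hE.2.2.1]
  have c17 : -2 ≤ (-a0 + 3 * a1 - a2) - (x0 + x1 + x2 - 4*x1) := by linarith only [h0.2.2.1]
  have c18 : -2 ≤ (-a0 + 3 * a1 - a2) - (y0 + y1 + y2 - 4*y1) := by linarith only [h1.2.2.1]
  have c19 : -2 ≤ (-a0 + 3 * a1 - a2) - (z0 + z1 + z2 - 4*z1) := by linarith only [h2.2.2.1]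
  have c20 : -2 ≤ (-a0 + 3 * a1 - a2) - (x0 + x1 + x2 - 4*x1) - (y0 + y1 + y2 - 4*y1) := by linarith only [h01.2.2.1]
  have c21 : -2 ≤ (-a0 + 3 * a1 - a2) - (x0 + x1 + x2 - 4*x1) - (z0 + z1 + z2 - 4*z1) := by linarith only [h02.2.2.1]
  have c22 : -2 ≤ (-a0 + 3 * a1 - a2) - (y0 + y1 + y2 - 4*y1) - (z0 + z1 + z2 - 4*z1) := by linarith only [h12.2.2.1]
  have c23 : -2 ≤ (-a0 + 3 * a1 - a2) - (x0 + x1 + x2 - 4*x1) - (y0 + y1 + y2 - 4*y1) - (z0 + z1 + z2 - 4*z1) := by linarith only [h012.2.2.1]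
  have c24 : -2 ≤ (-a0 - a1 + 3 * a2) := by linarith only [hE.2.2.2]
  have c25 : -2 ≤ (-a0 - a1 + 3 * a2) - (x0 + x1 + x2 - 4*x2) := by linarith only [h0.2.2.2]
  have c26 : -2 ≤ (-a0 - a1 + 3 * a2) - (y0 + y1 + y2 - 4*y2) := by linarith only [h1.2.2.2]
  have c27 : -2 ≤ (-a0 - a1 + 3 * a2) - (z0 + z1 + z2 - 4*z2) := by linarith only [h2.2.2.2]
  have c28 : -2 ≤ (-a0 - a1 + 3 * a2) - (x0 + x1 + x2 - 4*x2) - (y0 + y1 + y2 - 4*y2) := by linarith only [h01.2.2.2]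
  have c29 : -2 ≤ (-a0 - a1 + 3 * a2) - (x0 + x1 + x2 - 4*x2) - (z0 + z1 + z2 - 4*z2) := by linarith only [h02.2.2.2]
  have c30 : -2 ≤ (-a0 - a1 + 3 * a2) - (y0 + y1 + y2 - 4*y2) - (z0 + z1 + z2 - 4*z2) := by linarith only [h12.2.2.2]
  have c31 : -2 ≤ (-a0 - a1 + 3 * a2) - (x0 + x1 + x2 - 4*x2) - (y0 + y1 + y2 - 4*y2) - (z0 + z1 + z2 - 4*z2) := by linarith only [h012.2.2.2]
  have B1 := budget 2 (-(a0 + a1 + a2)) (x0 + x1 + x2) (y0 + y1 + y2) (z0 + z1 + z2) c0 c1 c2 c3 c4 c5 c6 c7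
  have B2 := budget 2 ((3 * a0 - a1 - a2)) (x0 + x1 + x2 - 4*x0) (y0 + y1 + y2 - 4*y0) (z0 + z1 + z2 - 4*z0) c8 c9 c10 c11 c12 c13 c14 c15
  have B3 := budget 2 ((-a0 + 3 * a1 - a2)) (x0 + x1 + x2 - 4*x1) (y0 + y1 + y2 - 4*y1) (z0 + z1 + z2 - 4*z1) c16 c17 c18 c19 c20 c21 c22 c23
  have B4 := budget 2 ((-a0 - a1 + 3 * a2)) (x0 + x1 + x2 - 4*x2) (y0 + y1 + y2 - 4*y2) (z0 + z1 + z2 - 4*z2) c24 c25 c26 c27 c28 c29 c30 c31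
  have axx := lemA x0 x1 x2 nx
  have ayy := lemA y0 y1 y2 ny
  have azz := lemA z0 z1 z2 nz3
  linarith only [B1, B2, B3, B4, axx, ayy, azz]

lemma coeO : coeV ![0,0,0] = (0 : Fin 3 → ℝ) := by
  funext i; fin_cases i <;> simp [coeV]

lemma memA : coeV ![-1,-1,-1] ∈ P19 := subset_convexHull ℝ _ (by simp)
lemma memB : coeV ![1,0,0] ∈ P19 := subset_convexHull ℝ _ (by simp)
lemma memC : coeV ![0,1,0] ∈ P19 := subset_convexHull ℝ _ (by simp)
lemma memD : coeV ![0,0,1] ∈ P19 := subset_convexHull ℝ _ (by simp)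

lemma memO : coeV ![0,0,0] ∈ P19 := by
  have hconv : Convex ℝ P19 := convex_convexHull ℝ _
  have hm := hconv memB memC (by norm_num : (0:ℝ) ≤ 1/2) (by norm_num : (0:ℝ) ≤ 1/2)
    (by norm_num)
  have hy := hconv memD hm (by norm_num : (0:ℝ) ≤ 1/3) (by norm_num : (0:ℝ) ≤ 2/3)
    (by norm_num)
  have h0 := hconv memA hy (by norm_num : (0:ℝ) ≤ 1/4) (by norm_num : (0:ℝ) ≤ 3/4)
    (by norm_num)
  convert h0 using 1
  funext i
  fin_cases i <;> simp [coeV] <;> norm_num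

lemma mem5 (x : Fin 3 → ℤ) (hx : coeV x ∈ P19) :
    x = ![-1,-1,-1] ∨ x = ![1,0,0] ∨ x = ![0,1,0] ∨ x = ![0,0,1] ∨ x = ![0,0,0] := by
  obtain ⟨h1, h2, h3, h4⟩ := hZint x hx
  have : (x 0 = -1 ∧ x 1 = -1 ∧ x 2 = -1) ∨ (x 0 = 1 ∧ x 1 = 0 ∧ x 2 = 0) ∨
      (x 0 = 0 ∧ x 1 = 1 ∧ x 2 = 0) ∨ (x 0 = 0 ∧ x 1 = 0 ∧ x 2 = 1) ∨
      (x 0 = 0 ∧ x 1 = 0 ∧ x 2 = 0) := by omega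
  rcases this with ⟨e0, e1, e2⟩ | ⟨e0, e1, e2⟩ | ⟨e0, e1, e2⟩ | ⟨e0, e1, e2⟩ | ⟨e0, e1, e2⟩
  · exact Or.inl (by funext i; fin_cases i <;> simp [e0, e1, e2])
  · exact Or.inr (Or.inl (by funext i; fin_cases i <;> simp [e0, e1, e2]))
  · exact Or.inr (Or.inr (Or.inl (by funext i; fin_cases i <;> simp [e0, e1, e2])))
  · exact Or.inr (Or.inr (Or.inr (Or.inl (by funext i; fin_cases i <;> simp [e0, e1, e2]))))
  · exact Or.inr (Or.inr (Or.inr (Or.inr (by funext i; fin_cases i <;> simp [e0, e1, e2]))))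

lemma minklen_P19 : MinkLen P19 1 := by
  constructor
  · refine ⟨![0,0,0], ![![1,0,0]], ?_, ?_⟩
    · intro i; fin_cases i; unfold IsPrim; decide
    · rw [Zono, Fin.sum_univ_one, coeO, Set.singleton_zero, zero_add]
      show segment ℝ 0 (coeV (![![1,0,0]] 0)) ⊆ P19
      refine (convex_convexHull ℝ _).segment_subset ?_ ?_
      · rw [← coeO]; exact memO
      · exact memB
  · rintro M ⟨A, v, hprim, hsub⟩
    by_contra hM
    push_neg at hM
    set i0 : Fin M := ⟨0, by omega⟩ with hi0
    set i1 : Fin M := ⟨1, by omega⟩ with hi1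
    have ne01 : i0 ≠ i1 := by simp [hi0, hi1, Fin.ext_iff]
    have H : ∀ S : Finset (Fin M),
        (A + ∑ i ∈ S, v i) 0 + (A + ∑ i ∈ S, v i) 1 + (A + ∑ i ∈ S, v i) 2 ≤ 1 ∧
        -1 ≤ 3 * (A + ∑ i ∈ S, v i) 0 - (A + ∑ i ∈ S, v i) 1 - (A + ∑ i ∈ S, v i) 2 ∧
        -1 ≤ -(A + ∑ i ∈ S, v i) 0 + 3 * (A + ∑ i ∈ S, v i) 1 - (A + ∑ i ∈ S, v i) 2 ∧
        -1 ≤ -(A + ∑ i ∈ S, v i) 0 - (A + ∑ i ∈ S, v i) 1 + 3 * (A + ∑ i ∈ S, v i) 2 :=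
      fun S => hZint _ (hsub (mem_zono A v S))
    have hE := H ∅
    have h0 := H {i0}
    have h1 := H {i1}
    have h01 := H {i0, i1}
    rw [Finset.sum_empty, add_zero] at hE
    rw [Finset.sum_singleton] at h0 h1
    rw [Finset.sum_pair ne01] at h01
    simp only [Pi.add_apply] at h0 h1 h01
    have nx := prim_ne (hprim i0)
    have ny := prim_ne (hprim i1)
    exact noTwo _ _ _ _ _ _ _ _ _ nx ny hE h0 h1 h01

lemma minklen_2P19 : MinkLen (P19 + P19) 2 := by
  constructor
  · refine ⟨![0,0,0], ![![1,0,0], ![0,1,0]], ?_, ?_⟩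
    · intro i; fin_cases i <;> (unfold IsPrim; decide)
    · rw [Zono, Fin.sum_univ_two, coeO, Set.singleton_zero, ← add_assoc, zero_add]
      show segment ℝ 0 (coeV (![![1,0,0], ![0,1,0]] 0)) +
        segment ℝ 0 (coeV (![![1,0,0], ![0,1,0]] 1)) ⊆ P19 + P19
      refine Set.add_subset_add ?_ ?_
      · refine (convex_convexHull ℝ _).segment_subset ?_ memB
        rw [← coeO]; exact memO
      · refine (convex_convexHull ℝ _).segment_subset ?_ memC
        rw [← coeO]; exact memO
  · rintro M ⟨A, v, hprim, hsub⟩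
    by_contra hM
    push_neg at hM
    set i0 : Fin M := ⟨0, by omega⟩ with hi0
    set i1 : Fin M := ⟨1, by omega⟩ with hi1
    set i2 : Fin M := ⟨2, by omega⟩ with hi2
    have ne01 : i0 ≠ i1 := by simp [hi0, hi1, Fin.ext_iff]
    have ne02 : i0 ≠ i2 := by simp [hi0, hi2, Fin.ext_iff]
    have ne12 : i1 ≠ i2 := by simp [hi1, hi2, Fin.ext_iff]
    have H : ∀ S : Finset (Fin M),
        (A + ∑ i ∈ S, v i) 0 + (A + ∑ i ∈ S, v i) 1 + (A + ∑ i ∈ S, v i) 2 ≤ 2 ∧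
        -2 ≤ 3 * (A + ∑ i ∈ S, v i) 0 - (A + ∑ i ∈ S, v i) 1 - (A + ∑ i ∈ S, v i) 2 ∧
        -2 ≤ -(A + ∑ i ∈ S, v i) 0 + 3 * (A + ∑ i ∈ S, v i) 1 - (A + ∑ i ∈ S, v i) 2 ∧
        -2 ≤ -(A + ∑ i ∈ S, v i) 0 - (A + ∑ i ∈ S, v i) 1 + 3 * (A + ∑ i ∈ S, v i) 2 :=
      fun S => h2int _ (hsub (mem_zono A v S))
    have hE := H ∅
    have h0 := H {i0}
    have h1 := H {i1}
    have h2 := H {i2}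
    have h01 := H {i0, i1}
    have h02 := H {i0, i2}
    have h12 := H {i1, i2}
    have h012 := H {i0, i1, i2}
    rw [Finset.sum_empty, add_zero] at hE
    rw [Finset.sum_singleton] at h0 h1 h2
    rw [Finset.sum_pair ne01] at h01
    rw [Finset.sum_pair ne02] at h02
    rw [Finset.sum_pair ne12] at h12
    rw [Finset.sum_insert (by simp [ne01, ne02]), Finset.sum_pair ne12] at h012
    simp only [Pi.add_apply] at h0 h1 h2 h01 h02 h12 h012
    have nx := prim_ne (hprim i0)
    have ny := prim_ne (hprim i1)
    have nz := prim_ne (hprim i2)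
    exact noThree _ _ _ _ _ _ _ _ _ _ _ _ nx ny nz hE h0 h1 h2 h01 h02 h12 h012

def pts : Fin 5 → Fin 3 → ℤ := ![![-1,-1,-1], ![1,0,0], ![0,1,0], ![0,0,1], ![0,0,0]]

lemma aux_classes : ∀ a b c d : Fin 5, a ≠ b → c ≠ d →
    ¬((a = c ∧ b = d) ∨ (a = d ∧ b = c)) →
    ¬ SameClass3 (fun i => pts b i - pts a i) (fun i => pts d i - pts c i) := by decide

lemma mem5' (x : Fin 3 → ℤ) (hx : coeV x ∈ P19) : ∃ a : Fin 5, x = pts a := by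
  rcases mem5 x hx with rfl | rfl | rfl | rfl | rfl
  exacts [⟨0, rfl⟩, ⟨1, rfl⟩, ⟨2, rfl⟩, ⟨3, rfl⟩, ⟨4, rfl⟩]

/-- `L(P19) = 1` and `L(2·P19) = 2`; the lattice points of `P19` are its four vertices and
the origin, and the ten segments they determine lie in ten pairwise distinct classes of
`ℤ₃ℙ²`. -/
theorem stmt19 :
    MinkLen P19 1 ∧ MinkLen (P19 + P19) 2 ∧
    {x : Fin 3 → ℤ | coeV x ∈ P19} =
      {![-1, -1, -1], ![1, 0, 0], ![0, 1, 0], ![0, 0, 1], ![0, 0, 0]} ∧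
    ∀ x y z w : Fin 3 → ℤ, coeV x ∈ P19 → coeV y ∈ P19 → coeV z ∈ P19 → coeV w ∈ P19 →
      x ≠ y → z ≠ w → ({x, y} : Set (Fin 3 → ℤ)) ≠ {z, w} →
      ¬ SameClass3 (fun i => y i - x i) (fun i => w i - z i) := by
  refine ⟨minklen_P19, minklen_2P19, ?_, ?_⟩
  · ext x
    simp only [Set.mem_setOf_eq, Set.mem_insert_iff, Set.mem_singleton_iff]
    constructor
    · exact mem5 x
    · rintro (rfl | rfl | rfl | rfl | rfl)
      exacts [memA, memB, memC, memD, memO]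
  · intro x y z w hx hy hz hw hxy hzw hne
    obtain ⟨a, rfl⟩ := mem5' x hx
    obtain ⟨b, rfl⟩ := mem5' y hy
    obtain ⟨c, rfl⟩ := mem5' z hz
    obtain ⟨d, rfl⟩ := mem5' w hw
    exact aux_classes a b c d (fun h => hxy (congrArg pts h))
      (fun h => hzw (congrArg pts h))
      (by rintro (⟨rfl, rfl⟩ | ⟨rfl, rfl⟩)
          exacts [hne rfl, hne (Set.pair_comm _ _)])
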